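/- Let n ≥ 1, m > 0 and 0 < θ ≤ 1 with n − 2θ > 0, and let δ₀ > 0. Then there exists a constant C > 0 depending only on n and θ such that for all t ≥ 1 and all P₁ ∈ ℝ, ∫_{|ξ| ≤ δ₀} |φ(t,ξ)|² dξ ≤ C (P₁²/m²) t^{-(n−2θ)/2}. -/

import Mathlib

open MeasureTheory Real
open scoped ENNReal

noncomputable section

/-- Euclidean space `ℝⁿ`. -/
abbrev E (n : ℕ) := EuclideanSpace ℝ (Fin n)

/-- The asymptotic profile `φ(t,ξ)`, as a function of `r = |ξ|`. -/
def phi (m θ P₁ t r : ℝ) : ℝ :=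
  P₁ * Real.exp (-(r ^ 2) * t / 2) *
    Real.sin (t * Real.sqrt (r ^ 2 + m ^ 2 * Real.log (1 + r ^ (2 * θ)))) /
    Real.sqrt (r ^ 2 + m ^ 2 * Real.log (1 + r ^ (2 * θ)))

open Set in
lemma lintegral_fun_norm_addHaar' {F : Type*} [NormedAddCommGroup F] [NormedSpace ℝ F]
    [MeasurableSpace F] [BorelSpace F] [FiniteDimensional ℝ F] [Nontrivial F]
    (μ : Measure F) [μ.IsAddHaarMeasure] (g : ℝ → ℝ≥0∞) (hg : Measurable g) :
    ∫⁻ x, g ‖x‖ ∂μ = μ.toSphere Set.univ *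
      ∫⁻ y in Set.Ioi (0:ℝ), ENNReal.ofReal (y ^ (Module.finrank ℝ F - 1)) * g y := by
  calc
    ∫⁻ x, g ‖x‖ ∂μ = ∫⁻ x : ({(0:F)}ᶜ : Set F), g ‖(x:F)‖ ∂(μ.comap (↑)) :=
      ((lintegral_subtype_comap (measurableSet_singleton (0:F)).compl
        (fun x => g ‖x‖)).trans (by rw [MeasureTheory.restrict_compl_singleton])).symm
    _ = ∫⁻ z : Metric.sphere (0:F) 1 × Set.Ioi (0:ℝ), g z.2
          ∂(μ.toSphere.prod (.volumeIoiPow (Module.finrank ℝ F - 1))) :=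
      by have h := (μ.measurePreserving_homeomorphUnitSphereProd).lintegral_comp_emb
           (Homeomorph.measurableEmbedding _) fun z => g z.2
         simpa only [homeomorphUnitSphereProd, homeomorphSphereProd_apply_snd_coe, div_one] using h
    _ = μ.toSphere Set.univ * ∫⁻ y : Set.Ioi (0:ℝ), g y
          ∂(Measure.volumeIoiPow (Module.finrank ℝ F - 1)) := by
      rw [MeasureTheory.lintegral_prod
        (f := fun z : Metric.sphere (0:F) 1 × Set.Ioi (0:ℝ) => g z.2)
        (Measurable.aemeasurable (by fun_prop))]
      simp [lintegral_const, mul_comm]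
    _ = μ.toSphere Set.univ *
        ∫⁻ y in Set.Ioi (0:ℝ), ENNReal.ofReal (y ^ (Module.finrank ℝ F - 1)) * g y := by
      congr 1
      rw [Measure.volumeIoiPow,
        lintegral_withDensity_eq_lintegral_mul _
          (f := fun r : Set.Ioi (0:ℝ) => ENNReal.ofReal ((r:ℝ) ^ (Module.finrank ℝ F - 1)))
          ((measurable_subtype_coe.pow_const _).ennreal_ofReal)
          (g := fun r : Set.Ioi (0:ℝ) => g r) (hg.comp measurable_subtype_coe)]
      simp only [Pi.mul_apply]
      exact lintegral_subtype_comap measurableSet_Ioi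
        (fun y => ENNReal.ofReal (y ^ (Module.finrank ℝ F - 1)) * g y)

open Set in
lemma oned {n : ℕ} (hn : 1 ≤ n) {θ t : ℝ} (hθ1 : 0 < θ) (hnθ : 0 < (n:ℝ) - 2*θ) (ht : 0 < t) :
    ∫⁻ y in Ioi (0:ℝ), ENNReal.ofReal (y ^ (n - 1)) *
        ENNReal.ofReal (y ^ (-(2*θ)) * Real.exp (-t * y ^ 2)) =
      ENNReal.ofReal (t ^ (-((n:ℝ) - 2*θ)/2) * ((1/2) * Real.Gamma (((n:ℝ) - 2*θ)/2))) := by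
  have hq : (-1 : ℝ) < (n:ℝ) - 1 - 2*θ := by linarith
  calc
    ∫⁻ y in Ioi (0:ℝ), ENNReal.ofReal (y ^ (n - 1)) *
        ENNReal.ofReal (y ^ (-(2*θ)) * Real.exp (-t * y ^ 2))
      = ∫⁻ y in Ioi (0:ℝ), ENNReal.ofReal (y ^ ((n:ℝ) - 1 - 2*θ) * Real.exp (-t * y ^ 2)) := by
        refine setLIntegral_congr_fun measurableSet_Ioi (
          fun y hy => ?_)
        have hy' : (0:ℝ) < y := hy
        rw [← ENNReal.ofReal_mul (by positivity)]
        congr 1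
        have h1 : (y : ℝ) ^ (n - 1 : ℕ) = y ^ ((n:ℝ) - 1) := by
          rw [← Real.rpow_natCast y (n - 1)]
          congr 1
          push_cast [Nat.cast_sub hn]
          ring
        rw [h1, ← mul_assoc, ← Real.rpow_add hy]
        ring_nf
    _ = ENNReal.ofReal (∫ y in Ioi (0:ℝ), y ^ ((n:ℝ) - 1 - 2*θ) * Real.exp (-t * y ^ 2)) := by
        refine (ofReal_integral_eq_lintegral_ofReal
          (integrableOn_rpow_mul_exp_neg_mul_sq ht hq) ?_).symm
        filter_upwards [ae_restrict_mem measurableSet_Ioi] with y hy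
        have : (0:ℝ) < y := hy
        positivity
    _ = ENNReal.ofReal (t ^ (-((n:ℝ) - 2*θ)/2) * ((1/2) * Real.Gamma (((n:ℝ) - 2*θ)/2))) := by
        congr 1
        rw [setIntegral_congr_fun measurableSet_Ioi
          (g := fun y => y ^ ((n:ℝ) - 1 - 2*θ) * Real.exp (-t * y ^ (2:ℝ)))
          (fun y hy => by simp only [Real.rpow_two]),
          integral_rpow_mul_exp_neg_mul_rpow two_pos hq ht]
        have h2 : ((n:ℝ) - 1 - 2*θ + 1) = (n:ℝ) - 2*θ := by ring
        rw [h2]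
        ring

lemma pointwise_bound {m θ δ₀ : ℝ} (hm : 0 < m) (hθ1 : 0 < θ) (hδ₀ : 0 < δ₀)
    (t P₁ : ℝ) {r : ℝ} (hr0 : 0 ≤ r) (hrδ : r ≤ δ₀) :
    phi m θ P₁ t r ^ 2 ≤
      P₁ ^ 2 / m ^ 2 * (1 + δ₀ ^ (2*θ)) * (r ^ (-(2*θ)) * Real.exp (-t * r ^ 2)) := by
  rcases eq_or_lt_of_le hr0 with h0 | hr
  · rw [← h0]
    simp [phi, Real.zero_rpow (show (2*θ) ≠ 0 by positivity),
      Real.zero_rpow (show -(2*θ) ≠ 0 by simp; positivity)]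
  · have hA : 0 < r ^ (2*θ) := Real.rpow_pos_of_pos hr _
    set A := r ^ (2*θ) with hAdef
    set K := 1 + δ₀ ^ (2*θ) with hKdef
    have hK : 0 < K := by positivity
    have hAK : A ≤ δ₀ ^ (2*θ) := Real.rpow_le_rpow hr0 hrδ (by positivity)
    have h1A : (0:ℝ) < 1 + A := by linarith
    have hlog1 : A / (1 + A) ≤ Real.log (1 + A) := by
      have h := Real.log_le_sub_one_of_pos (show 0 < (1+A)⁻¹ by positivity)
      rw [Real.log_inv] at h
      have h2 : (1+A)⁻¹ - 1 = -(A / (1+A)) := by field_simp; ring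
      rw [h2] at h
      linarith
    have hlog : A / K ≤ Real.log (1 + A) := by
      refine le_trans ?_ hlog1
      gcongr
      · rw [hKdef]; linarith
    set L := Real.log (1 + A) with hLdef
    have hL0 : 0 < L := Real.log_pos (by linarith)
    have hDpos : 0 < r ^ 2 + m ^ 2 * L := by positivity
    have hDlb : m ^ 2 * (A / K) ≤ r ^ 2 + m ^ 2 * L := by
      have := mul_le_mul_of_nonneg_left hlog (sq_nonneg m)
      nlinarith [sq_nonneg r]
    have hsq : Real.sqrt (r ^ 2 + m ^ 2 * L) ^ 2 = r ^ 2 + m ^ 2 * L :=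
      Real.sq_sqrt hDpos.le
    have he : Real.exp (-(r^2) * t / 2) ^ 2 = Real.exp (-t * r ^ 2) := by
      rw [sq, ← Real.exp_add]; congr 1; ring
    calc phi m θ P₁ t r ^ 2
        = (P₁ ^ 2 * Real.exp (-(r^2) * t / 2) ^ 2 *
            Real.sin (t * Real.sqrt (r ^ 2 + m ^ 2 * L)) ^ 2) / (r ^ 2 + m ^ 2 * L) := by
          rw [phi, div_pow, hsq, mul_pow, mul_pow]
      _ ≤ (P₁ ^ 2 * Real.exp (-t * r ^ 2)) / (m ^ 2 * (A / K)) := by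
          apply div_le_div₀ (by positivity) ?_ (by positivity) hDlb
          calc P₁ ^ 2 * Real.exp (-(r^2) * t / 2) ^ 2 *
                Real.sin (t * Real.sqrt (r ^ 2 + m ^ 2 * L)) ^ 2
              ≤ P₁ ^ 2 * Real.exp (-(r^2) * t / 2) ^ 2 * 1 := by
                apply mul_le_mul_of_nonneg_left (Real.sin_sq_le_one _) (by positivity)
            _ = P₁ ^ 2 * Real.exp (-t * r ^ 2) := by rw [mul_one, he]
      _ = P₁ ^ 2 / m ^ 2 * K * (r ^ (-(2*θ)) * Real.exp (-t * r ^ 2)) := by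
          rw [Real.rpow_neg hr0, ← hAdef]
          field_simp

/-- Lemma 6.1: low-frequency decay of the profile. -/
theorem stmt13 (n : ℕ) (hn : 1 ≤ n) (m θ : ℝ) (hm : 0 < m) (hθ1 : 0 < θ) (hθ2 : θ ≤ 1)
    (hnθ : 0 < (n : ℝ) - 2 * θ) (δ₀ : ℝ) (hδ₀ : 0 < δ₀) :
    ∃ C : ℝ, 0 < C ∧ ∀ t : ℝ, 1 ≤ t → ∀ P₁ : ℝ,
      (∫ ξ in {ξ : E n | ‖ξ‖ ≤ δ₀}, (phi m θ P₁ t ‖ξ‖) ^ 2) ≤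
        C * (P₁ ^ 2 / m ^ 2) * t ^ (-((n : ℝ) - 2 * θ) / 2) := by
  haveI : Nonempty (Fin n) := ⟨⟨0, hn⟩⟩
  haveI : Nontrivial (E n) := inferInstance
  have hdim : Module.finrank ℝ (E n) = n := finrank_euclideanSpace_fin
  set T : ℝ≥0∞ := Measure.toSphere (volume : Measure (E n)) Set.univ with hTdef
  have hTfin : T ≠ ⊤ := measure_ne_top _ _
  have hT0 : T ≠ 0 := by
    rw [hTdef, Measure.toSphere_apply_univ, hdim]
    exact mul_ne_zero (Nat.cast_ne_zero.mpr (by omega))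
      (Metric.measure_ball_pos volume (0 : E n) one_pos).ne'
  set G : ℝ := (1/2) * Real.Gamma (((n:ℝ) - 2*θ)/2) with hGdef
  have hG : 0 < G := by
    apply mul_pos (by norm_num)
    exact Real.Gamma_pos_of_pos (by linarith)
  set K : ℝ := 1 + δ₀ ^ (2*θ) with hKdef
  have hK : 0 < K := by positivity
  refine ⟨K * T.toReal * G, mul_pos (mul_pos hK (ENNReal.toReal_pos hT0 hTfin)) hG,
    fun t ht P₁ => ?_⟩
  have ht0 : 0 < t := lt_of_lt_of_le one_pos ht
  set B : ℝ → ℝ := fun y => y ^ (-(2*θ)) * Real.exp (-t * y ^ 2) with hBdef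
  have hBmeas : Measurable fun y : ℝ => ENNReal.ofReal (B y) := by
    apply Measurable.ennreal_ofReal
    rw [hBdef]
    fun_prop
  set Φ : ℝ := P₁ ^ 2 / m ^ 2 * K with hΦdef
  have hΦ0 : 0 ≤ Φ := by positivity
  set S : Set (E n) := {ξ : E n | ‖ξ‖ ≤ δ₀} with hSdef
  have hS : MeasurableSet S := measurableSet_le measurable_norm measurable_const
  have hphi_meas : AEStronglyMeasurable (fun ξ : E n => phi m θ P₁ t ‖ξ‖ ^ 2)
      ((volume : Measure (E n)).restrict S) := by
    apply Measurable.aestronglyMeasurable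
    have hrp : Measurable fun r : ℝ => r ^ (2*θ) := by fun_prop
    have hlog : Measurable fun r : ℝ => Real.log (1 + r ^ (2*θ)) :=
      Real.measurable_log.comp (measurable_const.add hrp)
    have hden : Measurable fun r : ℝ =>
        Real.sqrt (r ^ 2 + m ^ 2 * Real.log (1 + r ^ (2*θ))) :=
      Real.continuous_sqrt.measurable.comp
        ((measurable_id.pow_const 2).add (hlog.const_mul _))
    have hphi : Measurable fun r : ℝ => phi m θ P₁ t r ^ 2 := by
      unfold phi
      exact (((measurable_const.mul (Real.measurable_exp.comp
        (((measurable_id.pow_const 2).neg.mul_const t).div_const 2))).mul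
        (Real.measurable_sin.comp (hden.const_mul t))).div hden).pow_const 2
    exact hphi.comp measurable_norm
  have hI : (0:ℝ) ≤ t ^ (-((n:ℝ) - 2*θ)/2) * G :=
    mul_nonneg (Real.rpow_nonneg ht0.le _) hG.le
  have h2 : ∫⁻ ξ in S, ENNReal.ofReal (phi m θ P₁ t ‖ξ‖ ^ 2) ≤
      ENNReal.ofReal Φ * (T * ENNReal.ofReal (t ^ (-((n:ℝ) - 2*θ)/2) * G)) := by
    calc ∫⁻ ξ in S, ENNReal.ofReal (phi m θ P₁ t ‖ξ‖ ^ 2)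
        ≤ ∫⁻ ξ in S, ENNReal.ofReal (Φ * B ‖ξ‖) :=
          setLIntegral_mono' hS fun ξ hξ => ENNReal.ofReal_le_ofReal
            (by simpa [hΦdef, hBdef, mul_assoc] using
              pointwise_bound hm hθ1 hδ₀ t P₁ (norm_nonneg ξ) hξ)
      _ ≤ ∫⁻ ξ, ENNReal.ofReal (Φ * B ‖ξ‖) := setLIntegral_le_lintegral _ _
      _ = ENNReal.ofReal Φ * ∫⁻ ξ, ENNReal.ofReal (B ‖ξ‖) := by
          simp_rw [ENNReal.ofReal_mul hΦ0]
          exact lintegral_const_mul' _ _ ENNReal.ofReal_ne_top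
      _ = ENNReal.ofReal Φ * (T * ∫⁻ y in Set.Ioi (0:ℝ),
            ENNReal.ofReal (y ^ (n - 1)) * ENNReal.ofReal (B y)) := by
          rw [lintegral_fun_norm_addHaar' (volume : Measure (E n))
            (fun y => ENNReal.ofReal (B y)) hBmeas, hdim]
      _ = ENNReal.ofReal Φ * (T * ENNReal.ofReal (t ^ (-((n:ℝ) - 2*θ)/2) * G)) := by
          rw [hBdef, hGdef, oned hn hθ1 hnθ ht0]
  calc ∫ ξ in S, phi m θ P₁ t ‖ξ‖ ^ 2
      = (∫⁻ ξ in S, ENNReal.ofReal (phi m θ P₁ t ‖ξ‖ ^ 2)).toReal :=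
        integral_eq_lintegral_of_nonneg_ae (Filter.Eventually.of_forall
          fun ξ => sq_nonneg _) hphi_meas
    _ ≤ (ENNReal.ofReal Φ * (T * ENNReal.ofReal (t ^ (-((n:ℝ) - 2*θ)/2) * G))).toReal :=
        ENNReal.toReal_mono (ENNReal.mul_ne_top ENNReal.ofReal_ne_top
          (ENNReal.mul_ne_top hTfin ENNReal.ofReal_ne_top)) h2
    _ = Φ * (T.toReal * (t ^ (-((n:ℝ) - 2*θ)/2) * G)) := by
        rw [ENNReal.toReal_mul, ENNReal.toReal_mul, ENNReal.toReal_ofReal hΦ0,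
          ENNReal.toReal_ofReal hI]
    _ = K * T.toReal * G * (P₁ ^ 2 / m ^ 2) * t ^ (-((n:ℝ) - 2*θ)/2) := by
        rw [hΦdef]; ring

end
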